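/- Consider the flow given in clockwise polar coordinates by Φ(t, (θ, r)) = (θ + r t, r(1 + t)) and the induced planar map φ(T, ·) for T > 0, with f_T(x) = φ(T, x) − x. Then for every radius ρ > 0, deg(f_T, B_ρ, 0) = 1, where B_ρ is the open ball of radius ρ centered at the origin. -/

import Mathlib

noncomputable section

open Set Metric Bornology

/-- Clockwise polar coordinates `Ψ(θ, r) = (r cos θ, -r sin θ)`. -/
def PsiP (p : ℝ × ℝ) : ℝ × ℝ := (p.2 * Real.cos p.1, -(p.2 * Real.sin p.1))

/-- The set `Ψ⁻¹(E)` in the open half-plane (points with positive radius mapping into `E`). -/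
def preE (E : Set (ℝ × ℝ)) : Set (ℝ × ℝ) := {p : ℝ × ℝ | 0 < p.2 ∧ PsiP p ∈ E}

/-- `F` is `2π`-periodic in the first variable, on `Ψ⁻¹(E)`. -/
def PerOn (F : ℝ × ℝ → ℝ × ℝ) (E : Set (ℝ × ℝ)) : Prop :=
  ∀ p : ℝ × ℝ, p ∈ preE E → F (p.1 + 2 * Real.pi, p.2) = F p

/-- The rotation set `rot(F, E) = {F^θ(y)/(2π) : y ∈ Ψ⁻¹(E)}`. -/
def rotSet (F : ℝ × ℝ → ℝ × ℝ) (E : Set (ℝ × ℝ)) : Set ℝ :=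
  {t : ℝ | ∃ p ∈ preE E, t = (F p).1 / (2 * Real.pi)}

/-- `Σ(F, E) = ℤ ∩ conv (rot(F, E))`. -/
def SigmaSet (F : ℝ × ℝ → ℝ × ℝ) (E : Set (ℝ × ℝ)) : Set ℤ :=
  {n : ℤ | (n : ℝ) ∈ convexHull ℝ (rotSet F E)}

/-- `ν_i = (2πi, 0)`. -/
def nu (i : ℤ) : ℝ × ℝ := (2 * Real.pi * i, 0)

/-- A Brouwer degree theory on the plane, characterized by the classical axioms:
normalization, dependence only on boundary values, homotopy invariance, additivity,
and the solution property. -/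
structure DegTheory where
  deg : (ℝ × ℝ → ℝ × ℝ) → Set (ℝ × ℝ) → ℝ × ℝ → ℤ
  deg_id : ∀ (U : Set (ℝ × ℝ)) (v : ℝ × ℝ), IsOpen U → IsBounded U → v ∈ U →
    deg id U v = 1
  deg_congr : ∀ (g₁ g₂ : ℝ × ℝ → ℝ × ℝ) (U : Set (ℝ × ℝ)) (v : ℝ × ℝ),
    IsOpen U → IsBounded U → ContinuousOn g₁ (closure U) → ContinuousOn g₂ (closure U) →
    (∀ x ∈ frontier U, g₁ x = g₂ x) → (∀ x ∈ frontier U, g₁ x ≠ v) →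
    deg g₁ U v = deg g₂ U v
  deg_homotopy : ∀ (H : (ℝ × ℝ) × ℝ → ℝ × ℝ) (U : Set (ℝ × ℝ)) (v : ℝ × ℝ),
    IsOpen U → IsBounded U →
    ContinuousOn H ((closure U) ×ˢ Icc (0:ℝ) 1) →
    (∀ x ∈ frontier U, ∀ t ∈ Icc (0:ℝ) 1, H (x, t) ≠ v) →
    deg (fun x => H (x, 0)) U v = deg (fun x => H (x, 1)) U v
  deg_additive : ∀ (g : ℝ × ℝ → ℝ × ℝ) (U U₁ U₂ : Set (ℝ × ℝ)) (v : ℝ × ℝ),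
    IsOpen U → IsOpen U₁ → IsOpen U₂ → IsBounded U →
    U₁ ⊆ U → U₂ ⊆ U → Disjoint U₁ U₂ → ContinuousOn g (closure U) →
    (∀ x ∈ closure U \ (U₁ ∪ U₂), g x ≠ v) →
    deg g U v = deg g U₁ v + deg g U₂ v
  deg_exists : ∀ (g : ℝ × ℝ → ℝ × ℝ) (U : Set (ℝ × ℝ)) (v : ℝ × ℝ),
    IsOpen U → IsBounded U → ContinuousOn g (closure U) →
    deg g U v ≠ 0 → ∃ x ∈ U, g x = v

/-- `g : ℝ² → ℝ²` represents `F_ext ∘ Ψ⁻¹` for an admissible extension `F_ext` of `F`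
(`F` being defined on `Ψ⁻¹(∂U)`): `g` is continuous on the plane and agrees with
`F ∘ Ψ⁻¹` on `∂U`.  (Via `F_ext = g ∘ Ψ`, this is equivalent to the existence of a
continuous extension `F_ext` of `F` to the closed half-plane which is `2π`-periodic in
the first variable and constant on the line `r = 0`.) -/
def IsDExt (F : ℝ × ℝ → ℝ × ℝ) (U : Set (ℝ × ℝ)) (g : ℝ × ℝ → ℝ × ℝ) : Prop :=
  Continuous g ∧ ∀ p : ℝ × ℝ, p ∈ preE (frontier U) → g (PsiP p) = F p

/-- Euclidean open ball of radius `ρ` about the origin of the plane. -/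
def ball2 (ρ : ℝ) : Set (ℝ × ℝ) := {x : ℝ × ℝ | x.1 ^ 2 + x.2 ^ 2 < ρ ^ 2}

/-- Euclidean circle of radius `ρ` about the origin of the plane. -/
def sphere2 (ρ : ℝ) : Set (ℝ × ℝ) := {x : ℝ × ℝ | x.1 ^ 2 + x.2 ^ 2 = ρ ^ 2}

/-- Euclidean norm on the plane. -/
def sqnorm (x : ℝ × ℝ) : ℝ := Real.sqrt (x.1 ^ 2 + x.2 ^ 2)

/-- `Φ` is the (unique) lift, through the clockwise polar coordinates `Ψ`, of the
evolution map `φ` on `[0,T] × Ψ⁻¹(S)`: it is continuous, starts from the identity,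
projects to `φ` via `Ψ`, stays in the open half-plane, and is equivariant under the
deck transformation `θ ↦ θ + 2π`. -/
def IsLiftOn (φ : ℝ → ℝ × ℝ → ℝ × ℝ) (Φ : ℝ → ℝ × ℝ → ℝ × ℝ) (T : ℝ)
    (S : Set (ℝ × ℝ)) : Prop :=
  ContinuousOn (fun q : ℝ × (ℝ × ℝ) => Φ q.1 q.2) (Icc 0 T ×ˢ preE S) ∧
  (∀ p ∈ preE S, Φ 0 p = p) ∧
  (∀ t ∈ Icc 0 T, ∀ p ∈ preE S,
    PsiP (Φ t p) = φ t (PsiP p) ∧ 0 < (Φ t p).2 ∧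
    Φ t (p.1 + 2 * Real.pi, p.2) = ((Φ t p).1 + 2 * Real.pi, (Φ t p).2))

/-- The planar map given in clockwise polar coordinates by
`Φ(t,(θ,r)) = (θ + rt, r(1+t))`. -/
def phiSpiral (t : ℝ) (x : ℝ × ℝ) : ℝ × ℝ :=
  (1 + t) • (x.1 * Real.cos (sqnorm x * t) + x.2 * Real.sin (sqnorm x * t),
    -(x.1 * Real.sin (sqnorm x * t)) + x.2 * Real.cos (sqnorm x * t))

lemma continuous_sqnorm : Continuous sqnorm := by
  unfold sqnorm
  exact Real.continuous_sqrt.comp (by fun_prop)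

lemma continuous_phiSpiral2 : Continuous (fun q : ℝ × (ℝ × ℝ) => phiSpiral q.1 q.2) := by
  unfold phiSpiral
  have h := continuous_sqnorm
  fun_prop

lemma sq_phiSpiral (t : ℝ) (x : ℝ × ℝ) :
    (phiSpiral t x).1 ^ 2 + (phiSpiral t x).2 ^ 2 = (1 + t) ^ 2 * (x.1 ^ 2 + x.2 ^ 2) := by
  simp only [phiSpiral, Prod.smul_fst, Prod.smul_snd, smul_eq_mul]
  nlinarith [Real.sin_sq_add_cos_sq (sqnorm x * t)]

lemma phiSpiral_zero (x : ℝ × ℝ) : phiSpiral 0 x = x := by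
  simp [phiSpiral]

lemma isOpen_ball2 (ρ : ℝ) : IsOpen (ball2 ρ) :=
  isOpen_lt (by fun_prop) continuous_const

lemma isBounded_ball2 (ρ : ℝ) : IsBounded (ball2 ρ) := by
  apply (Metric.isBounded_closedBall (x := (0 : ℝ × ℝ)) (r := |ρ|)).subset
  intro x hx
  have hx' : x.1 ^ 2 + x.2 ^ 2 < ρ ^ 2 := hx
  simp only [Metric.mem_closedBall, dist_zero_right, Prod.norm_def, Real.norm_eq_abs,
    max_le_iff]
  constructor <;> nlinarith [abs_nonneg x.1, abs_nonneg x.2, sq_abs x.1, sq_abs x.2,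
    sq_nonneg x.1, sq_nonneg x.2, sq_abs ρ, abs_nonneg ρ]

lemma frontier_ball2_subset (ρ : ℝ) : frontier (ball2 ρ) ⊆ sphere2 ρ := by
  intro x hx
  have hcl : x ∈ closure (ball2 ρ) := hx.1
  have hni : x ∉ interior (ball2 ρ) := hx.2
  have hle : x.1 ^ 2 + x.2 ^ 2 ≤ ρ ^ 2 := by
    have hclosed : IsClosed {y : ℝ × ℝ | y.1 ^ 2 + y.2 ^ 2 ≤ ρ ^ 2} :=
      isClosed_le (by fun_prop) continuous_const
    exact closure_minimal
      (show ball2 ρ ⊆ {y : ℝ × ℝ | y.1 ^ 2 + y.2 ^ 2 ≤ ρ ^ 2} from fun y hy => le_of_lt (show y.1 ^ 2 + y.2 ^ 2 < ρ ^ 2 from hy))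
      hclosed hcl
  have hnlt : ¬ (x.1 ^ 2 + x.2 ^ 2 < ρ ^ 2) := by
    intro h
    rw [(isOpen_ball2 ρ).interior_eq] at hni
    exact hni h
  exact le_antisymm hle (not_lt.1 hnlt)

/-- for the flow `Φ(t,(θ,r)) = (θ + rt, r(1+t))` and any `T > 0`,
`deg(f_T, B_ρ, 0) = 1` for every radius `ρ > 0`, where `f_T = φ(T,·) - id`. -/
theorem statement17 (D : DegTheory) (T : ℝ) (hT : 0 < T) (ρ : ℝ) (hρ : 0 < ρ) :
    D.deg (fun x => phiSpiral T x - x) (ball2 ρ) 0 = 1 := by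
  have hU : IsOpen (ball2 ρ) := isOpen_ball2 ρ
  have hB : IsBounded (ball2 ρ) := isBounded_ball2 ρ
  -- Step 1: homotopy H1 (x,s) ↦ phiSpiral T x - (1-s)•x, from f_T to phiSpiral T
  have step1 : D.deg (fun x => phiSpiral T x - x) (ball2 ρ) 0
      = D.deg (fun x => phiSpiral T x) (ball2 ρ) 0 := by
    have h := D.deg_homotopy
      (fun q : (ℝ × ℝ) × ℝ => phiSpiral T q.1 - (1 - q.2) • q.1) (ball2 ρ) 0 hU hB
      (by
        apply Continuous.continuousOn
        have h1 : Continuous (fun q : (ℝ × ℝ) × ℝ => phiSpiral T q.1) :=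
          continuous_phiSpiral2.comp (continuous_const.prodMk continuous_fst)
        fun_prop)
      (by
        intro x hx s hs h0
        have hxs : x ∈ sphere2 ρ := frontier_ball2_subset ρ hx
        have hsq : x.1 ^ 2 + x.2 ^ 2 = ρ ^ 2 := hxs
        have heq : phiSpiral T x = (1 - s) • x := sub_eq_zero.1 h0
        have h1 : (phiSpiral T x).1 = (1 - s) * x.1 := by rw [heq]; rfl
        have h2 : (phiSpiral T x).2 = (1 - s) * x.2 := by rw [heq]; rfl
        have hsqφ := sq_phiSpiral T x
        rw [h1, h2, hsq] at hsqφ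
        have hs0 : 0 ≤ s := hs.1
        have hs1 : s ≤ 1 := hs.2
        have hL : ((1 - s) * x.1) ^ 2 + ((1 - s) * x.2) ^ 2 = (1 - s) ^ 2 * ρ ^ 2 := by
          rw [← hsq]; ring
        rw [hL] at hsqφ
        have hkey : (1 - s) ^ 2 < (1 + T) ^ 2 := by nlinarith
        have := mul_lt_mul_of_pos_right hkey (pow_pos hρ 2)
        linarith)
    have e0 : (fun x : ℝ × ℝ => phiSpiral T x - (1 - (0:ℝ)) • x)
        = fun x => phiSpiral T x - x := by funext x; simp
    have e1 : (fun x : ℝ × ℝ => phiSpiral T x - (1 - (1:ℝ)) • x)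
        = fun x => phiSpiral T x := by funext x; simp
    simpa [e0, e1] using h
  -- Step 2: homotopy H2 (x,s) ↦ phiSpiral (s*T) x, from id to phiSpiral T
  have step2 : D.deg (fun x : ℝ × ℝ => x) (ball2 ρ) 0
      = D.deg (fun x => phiSpiral T x) (ball2 ρ) 0 := by
    have h := D.deg_homotopy
      (fun q : (ℝ × ℝ) × ℝ => phiSpiral (q.2 * T) q.1) (ball2 ρ) 0 hU hB
      (by
        apply Continuous.continuousOn
        exact continuous_phiSpiral2.comp
          ((continuous_snd.mul continuous_const).prodMk continuous_fst))
      (by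
        intro x hx s hs h0
        have hxs : x ∈ sphere2 ρ := frontier_ball2_subset ρ hx
        have hsq : x.1 ^ 2 + x.2 ^ 2 = ρ ^ 2 := hxs
        have h0' : phiSpiral (s * T) x = 0 := h0
        have hsqφ := sq_phiSpiral (s * T) x
        rw [h0', hsq] at hsqφ
        have hs0 : 0 ≤ s := hs.1
        have hst : 0 ≤ s * T := mul_nonneg hs0 hT.le
        simp only [Prod.fst_zero, Prod.snd_zero] at hsqφ
        have hpos : 0 < (1 + s * T) ^ 2 * ρ ^ 2 := by positivity
        nlinarith)
    simpa [phiSpiral_zero] using h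
  have hid : D.deg (fun x : ℝ × ℝ => x) (ball2 ρ) 0 = 1 := by
    have h0 : (0 : ℝ × ℝ) ∈ ball2 ρ := by
      show (0:ℝ×ℝ).1 ^ 2 + (0:ℝ×ℝ).2 ^ 2 < ρ ^ 2
      simpa using pow_pos hρ 2
    exact D.deg_id (ball2 ρ) 0 hU hB h0
  rw [step1, ← step2, hid]
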